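/- Let R be an r × t matrix with i.i.d. entries uniform on F_q, and let x, y be independent uniform random vectors in F_q^r, also independent of R. Then Pr(y ∉ span of columns of (R | x)) ≤ Pr(x ∉ span of columns of R). Consequently, the expected rank E[rk(R_{r,t})] of an r × t uniformly random matrix over F_q is a concave function of t: E[rk(R_{r,t+2})] − E[rk(R_{r,t+1})] ≤ E[rk(R_{r,t+1})] − E[rk(R_{r,t})]. -/

import Mathlib

open scoped Classical

/-- The span of the columns of a matrix. -/
noncomputable def colSpan {F : Type} [Field F] {r t : ℕ}
    (A : Matrix (Fin r) (Fin t) F) : Submodule F (Fin r → F) :=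
  Submodule.span F (Set.range (fun j : Fin t => fun i => A i j))

/-- Juxtaposition `(A | x)` of a matrix with an extra column. -/
noncomputable def appendCol {F : Type} [Field F] {r t : ℕ}
    (A : Matrix (Fin r) (Fin t) F) (x : Fin r → F) : Matrix (Fin r) (Fin (t + 1)) F :=
  Matrix.of fun i j => if h : (j : ℕ) < t then A i ⟨j, h⟩ else x i

/-- Expected rank of an `r × t` uniformly random matrix over `F`. -/
noncomputable def expRank (F : Type) [Field F] [Fintype F] [DecidableEq F] (r t : ℕ) : ℝ :=
  (∑ A : Matrix (Fin r) (Fin t) F, (A.rank : ℝ)) /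
    (Fintype.card (Matrix (Fin r) (Fin t) F) : ℝ)

variable {F : Type} [Field F] {r t : ℕ}

lemma colSpan_eq_range (A : Matrix (Fin r) (Fin t) F) :
    colSpan A = LinearMap.range A.mulVecLin := by
  rw [Matrix.range_mulVecLin, colSpan]
  rfl

lemma rank_eq_finrank_colSpan (A : Matrix (Fin r) (Fin t) F) :
    A.rank = Module.finrank F (colSpan A) := by
  rw [Matrix.rank, colSpan_eq_range]

lemma colSpan_appendCol (A : Matrix (Fin r) (Fin t) F) (x : Fin r → F) :
    colSpan (appendCol A x) = colSpan A ⊔ Submodule.span F {x} := by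
  apply le_antisymm
  · rw [colSpan, Submodule.span_le]
    rintro _ ⟨j, rfl⟩
    beta_reduce
    by_cases h : (j : ℕ) < t
    · apply Submodule.mem_sup_left
      have : (fun i => appendCol A x i j) = fun i => A i ⟨j, h⟩ := by
        funext i; simp [appendCol, h]
      exact this ▸ Submodule.subset_span ⟨⟨j, h⟩, rfl⟩
    · apply Submodule.mem_sup_right
      have : (fun i => appendCol A x i j) = x := by
        funext i; simp [appendCol, h]
      rw [this]; exact Submodule.mem_span_singleton_self x
  · apply sup_le
    · rw [colSpan, Submodule.span_le]
      rintro _ ⟨j, rfl⟩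
      beta_reduce
      have : (fun i => A i j) = fun i => appendCol A x i ⟨j, by omega⟩ := by
        funext i; simp [appendCol, j.isLt]
      exact this ▸ Submodule.subset_span ⟨⟨↑j, by omega⟩, rfl⟩
    · rw [Submodule.span_le, Set.singleton_subset_iff]
      have : x = fun i => appendCol A x i ⟨t, by omega⟩ := by
        funext i; simp [appendCol]
      exact Submodule.subset_span ⟨⟨t, by omega⟩, this.symm⟩

lemma colSpan_le_appendCol (A : Matrix (Fin r) (Fin t) F) (x : Fin r → F) :
    colSpan A ≤ colSpan (appendCol A x) := by
  rw [colSpan_appendCol]; exact le_sup_left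

lemma rank_appendCol (A : Matrix (Fin r) (Fin t) F) (x : Fin r → F) :
    (appendCol A x).rank = A.rank + (if x ∉ colSpan A then 1 else 0) := by
  rw [rank_eq_finrank_colSpan, rank_eq_finrank_colSpan, colSpan_appendCol]
  by_cases hx : x ∈ colSpan A
  · rw [if_neg (by simpa using hx)]
    rw [sup_eq_left.mpr (by rwa [Submodule.span_le, Set.singleton_subset_iff]), add_zero]
  · rw [if_pos hx]
    have hx0 : x ≠ 0 := by rintro rfl; exact hx (Submodule.zero_mem _)
    have hd : Disjoint (colSpan A) (Submodule.span F {x}) :=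
      (Submodule.disjoint_span_singleton' hx0).mpr hx
    have := Submodule.finrank_sup_add_finrank_inf_eq (colSpan A) (Submodule.span F {x})
    rw [hd.eq_bot, finrank_bot, add_zero, finrank_span_singleton hx0] at this
    omega

/-- The equivalence between pairs and (t+1)-column matrices. -/
noncomputable def appendEquiv (F : Type) [Field F] (r t : ℕ) :
    (Matrix (Fin r) (Fin t) F × (Fin r → F)) ≃ Matrix (Fin r) (Fin (t + 1)) F where
  toFun p := appendCol p.1 p.2
  invFun A := (Matrix.of fun i j => A i ⟨j, by omega⟩, fun i => A i ⟨t, by omega⟩)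
  left_inv p := by
    ext i j
    · simp [appendCol, j.isLt]
    · simp [appendCol]
  right_inv A := by
    ext i j
    by_cases h : (j : ℕ) < t
    · simp [appendCol, h]
    · have : (j : ℕ) = t := by omega
      simp [appendCol, h, ← this]

lemma card_succ_matrices (F : Type) [Field F] [Fintype F] [DecidableEq F] (r t : ℕ) :
    Fintype.card (Matrix (Fin r) (Fin (t + 1)) F)
      = Fintype.card (Matrix (Fin r) (Fin t) F) * Fintype.card (Fin r → F) := by
  rw [← Fintype.card_prod]
  exact (Fintype.card_congr (appendEquiv F r t)).symm

lemma expRank_succ_sub (F : Type) [Field F] [Fintype F] [DecidableEq F] (r t : ℕ) :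
    expRank F r (t + 1) - expRank F r t =
      (∑ R : Matrix (Fin r) (Fin t) F, ∑ x : Fin r → F,
          if x ∉ colSpan R then (1 : ℝ) else 0) /
        ((Fintype.card (Matrix (Fin r) (Fin t) F) : ℝ) * (Fintype.card (Fin r → F) : ℝ)) := by
  set N : ℝ := (Fintype.card (Matrix (Fin r) (Fin t) F) : ℝ) with hNdef
  set V : ℝ := (Fintype.card (Fin r → F) : ℝ) with hVdef
  have hN : (0 : ℝ) < N := by positivity
  have hV : (0 : ℝ) < V := by positivity
  set T : ℝ := ∑ R : Matrix (Fin r) (Fin t) F, (R.rank : ℝ) with hTdef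
  set S : ℝ := ∑ R : Matrix (Fin r) (Fin t) F, ∑ x : Fin r → F,
      (if x ∉ colSpan R then (1 : ℝ) else 0) with hSdef
  have hsum : ∑ A : Matrix (Fin r) (Fin (t + 1)) F, (A.rank : ℝ) = V * T + S := by
    rw [← Equiv.sum_comp (appendEquiv F r t) (fun A => (A.rank : ℝ)), Fintype.sum_prod_type]
    have : ∀ (R : Matrix (Fin r) (Fin t) F) (x : Fin r → F),
        ((appendEquiv F r t (R, x)).rank : ℝ)
          = (R.rank : ℝ) + (if x ∉ colSpan R then (1 : ℝ) else 0) := by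
      intro R x
      show ((appendCol R x).rank : ℝ) = _
      rw [rank_appendCol]
      push_cast
      split <;> simp
    simp only [this]
    rw [hSdef, hTdef, Finset.mul_sum, ← Finset.sum_add_distrib]
    congr 1
    funext R
    rw [Finset.sum_add_distrib, Finset.sum_const, Finset.card_univ]
    push_cast [hVdef]
    ring
  have hcard : (Fintype.card (Matrix (Fin r) (Fin (t + 1)) F) : ℝ) = N * V := by
    rw [card_succ_matrices]; push_cast; rfl
  rw [expRank, expRank, hsum, hcard, ← hTdef, ← hNdef]
  field_simp
  ring


/-- For `R` an `r × t` uniformly random matrix over `F_q` and `x, y`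
independent uniform vectors in `F_q^r` (independent of `R`),
`Pr(y ∉ span(R | x)) ≤ Pr(x ∉ span R)`; consequently the expected rank
`E[rk(R_{r,t})]` is concave in `t`. -/
theorem span_prob_mono_and_expRank_concave
    (F : Type) [Field F] [Fintype F] [DecidableEq F] (r t : ℕ) :
    ((∑ R : Matrix (Fin r) (Fin t) F, ∑ x : Fin r → F, ∑ y : Fin r → F,
        if y ∉ colSpan (appendCol R x) then (1 : ℝ) else 0) /
      ((Fintype.card (Matrix (Fin r) (Fin t) F) : ℝ) *
        (Fintype.card (Fin r → F) : ℝ) * (Fintype.card (Fin r → F) : ℝ))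
      ≤ (∑ R : Matrix (Fin r) (Fin t) F, ∑ x : Fin r → F,
          if x ∉ colSpan R then (1 : ℝ) else 0) /
        ((Fintype.card (Matrix (Fin r) (Fin t) F) : ℝ) *
          (Fintype.card (Fin r → F) : ℝ)))
    ∧ expRank F r (t + 2) - expRank F r (t + 1)
        ≤ expRank F r (t + 1) - expRank F r t := by
  set N : ℝ := (Fintype.card (Matrix (Fin r) (Fin t) F) : ℝ) with hNdef
  set V : ℝ := (Fintype.card (Fin r → F) : ℝ) with hVdef
  have hN : (0 : ℝ) < N := by positivity
  have hV : (0 : ℝ) < V := by positivity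
  set S : ℝ := ∑ R : Matrix (Fin r) (Fin t) F, ∑ x : Fin r → F,
      (if x ∉ colSpan R then (1 : ℝ) else 0) with hSdef
  set L : ℝ := ∑ R : Matrix (Fin r) (Fin t) F, ∑ x : Fin r → F, ∑ y : Fin r → F,
      (if y ∉ colSpan (appendCol R x) then (1 : ℝ) else 0) with hLdef
  have key : L ≤ V * S := by
    have h1 : L ≤ ∑ R : Matrix (Fin r) (Fin t) F, ∑ _x : Fin r → F, ∑ y : Fin r → F,
        (if y ∉ colSpan R then (1 : ℝ) else 0) := by
      apply Finset.sum_le_sum; intro R _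
      apply Finset.sum_le_sum; intro x _
      apply Finset.sum_le_sum; intro y _
      by_cases hy : y ∈ colSpan R
      · have hy2 : y ∈ colSpan (appendCol R x) := colSpan_le_appendCol R x hy
        simp [hy, hy2]
      · split_ifs <;> norm_num
    calc L ≤ _ := h1
      _ = V * S := by
          rw [hSdef, Finset.mul_sum]
          congr 1
          funext R
          rw [Finset.sum_const, Finset.card_univ, nsmul_eq_mul, ← hVdef]
  have part1 : L / (N * V * V) ≤ S / (N * V) := by
    have heq : S / (N * V) = (V * S) / (N * V * V) := by
      field_simp
    rw [heq]
    exact (div_le_div_iff_of_pos_right (by positivity)).mpr key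
  refine ⟨part1, ?_⟩
  rw [expRank_succ_sub F r t, show t + 2 = (t + 1) + 1 from rfl, expRank_succ_sub F r (t + 1)]
  rw [← hNdef, ← hVdef, ← hSdef]
  have hnum : (∑ A : Matrix (Fin r) (Fin (t + 1)) F, ∑ y : Fin r → F,
      if y ∉ colSpan A then (1 : ℝ) else 0) = L := by
    rw [hLdef, ← Equiv.sum_comp (appendEquiv F r t)
      (fun A => ∑ y : Fin r → F, if y ∉ colSpan A then (1 : ℝ) else 0), Fintype.sum_prod_type]
    rfl
  have hcard : (Fintype.card (Matrix (Fin r) (Fin (t + 1)) F) : ℝ) = N * V := by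
    rw [card_succ_matrices]; push_cast; rfl
  rw [hnum, hcard]
  exact part1
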